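/- Theorem 1 (LipNet-MRAC stability bound). Let x_a : ℕ → ℝ^n, x_m : ℕ → ℝ^m, and u : ℕ → ℝ be ℓ² signals, let γ > 0 and β ≥ 0 be constants, and let T : ℝ^n × ℝ^m × ℝ → ℝ be an L-Lipschitz function (with respect to the Euclidean norm on the concatenated input) satisfying T(0,0,0) = 0. Define the input adjustment δu_k = T(x_{a,k}, x_{m,k}, u_k) for all k. Assume the robot-system gain bound ‖x_a‖_{ℓ²} ≤ γ‖u + δu‖_{ℓ²} + β holds, and that L < 1/γ. Then the state signal satisfies ‖x_a‖_{ℓ²} ≤ (γ(1+L)‖u‖_{ℓ²} + γL‖x_m‖_{ℓ²} + β) / (1 − γL). -/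
import Mathlib
open scoped ENNReal

/-- The ℓ² signal norm of a discrete-time signal: `‖x‖_{ℓ²} = (∑_{k=0}^∞ ‖x_k‖²)^{1/2}`. -/
noncomputable def l2Norm {E : Type*} [NormedAddCommGroup E] (x : ℕ → E) : ℝ :=
  Real.sqrt (∑' k, ‖x k‖ ^ 2)

lemma sq_summable_memℓp {E : Type*} [NormedAddCommGroup E] {f : ℕ → E}
    (hf : Summable fun k => ‖f k‖ ^ 2) : Memℓp f (2 : ℝ≥0∞) := by
  apply memℓp_gen
  have : (2 : ℝ≥0∞).toReal = (2 : ℝ) := by norm_num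
  rw [this]
  simpa [Real.rpow_natCast] using hf

lemma l2Norm_eq_lp_norm {E : Type*} [NormedAddCommGroup E] (f : ℕ → E)
    (hf : Memℓp f (2 : ℝ≥0∞)) :
    Real.sqrt (∑' k, ‖f k‖ ^ 2) = ‖(⟨f, hf⟩ : lp (fun _ : ℕ => E) 2)‖ := by
  rw [lp.norm_eq_tsum_rpow (by norm_num) ]
  have h2 : (2 : ℝ≥0∞).toReal = (2 : ℝ) := by norm_num
  simp only [h2]
  rw [Real.sqrt_eq_rpow]
  norm_num

lemma l2_triangle {E : Type*} [NormedAddCommGroup E] (f g : ℕ → E)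
    (hf : Summable fun k => ‖f k‖ ^ 2) (hg : Summable fun k => ‖g k‖ ^ 2) :
    Real.sqrt (∑' k, ‖f k + g k‖ ^ 2) ≤
      Real.sqrt (∑' k, ‖f k‖ ^ 2) + Real.sqrt (∑' k, ‖g k‖ ^ 2) := by
  have hf' := sq_summable_memℓp hf
  have hg' := sq_summable_memℓp hg
  have hfg : Memℓp (f + g) (2 : ℝ≥0∞) := hf'.add hg'
  have e1 : Real.sqrt (∑' k, ‖f k + g k‖ ^ 2)
      = ‖(⟨f + g, hfg⟩ : lp (fun _ : ℕ => E) 2)‖ := l2Norm_eq_lp_norm (f + g) hfg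
  have e2 : (⟨f + g, hfg⟩ : lp (fun _ : ℕ => E) 2)
      = (⟨f, hf'⟩ : lp (fun _ : ℕ => E) 2) + ⟨g, hg'⟩ := rfl
  rw [e1, e2, l2Norm_eq_lp_norm f hf', l2Norm_eq_lp_norm g hg']
  exact norm_add_le _ _

lemma sqrt_add_le' (a b : ℝ) (ha : 0 ≤ a) (hb : 0 ≤ b) :
    Real.sqrt (a + b) ≤ Real.sqrt a + Real.sqrt b := by
  have h : a + b ≤ (Real.sqrt a + Real.sqrt b) ^ 2 := by
    nlinarith [Real.sq_sqrt ha, Real.sq_sqrt hb,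
      mul_nonneg (Real.sqrt_nonneg a) (Real.sqrt_nonneg b)]
  calc Real.sqrt (a + b) ≤ Real.sqrt ((Real.sqrt a + Real.sqrt b) ^ 2) :=
        Real.sqrt_le_sqrt h
    _ = Real.sqrt a + Real.sqrt b :=
        Real.sqrt_sq (add_nonneg (Real.sqrt_nonneg a) (Real.sqrt_nonneg b))

theorem lipnet_mrac_stability_bound {n m : ℕ}
    (xa : ℕ → EuclideanSpace ℝ (Fin n)) (xm : ℕ → EuclideanSpace ℝ (Fin m)) (u : ℕ → ℝ)
    (hxa : Summable fun k => ‖xa k‖ ^ 2)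
    (hxm : Summable fun k => ‖xm k‖ ^ 2)
    (hu : Summable fun k => ‖u k‖ ^ 2)
    (γ β L : ℝ) (hγ : 0 < γ) (hβ : 0 ≤ β) (hL0 : 0 ≤ L)
    (T : EuclideanSpace ℝ (Fin n) → EuclideanSpace ℝ (Fin m) → ℝ → ℝ)
    (hT : ∀ (x x' : EuclideanSpace ℝ (Fin n)) (y y' : EuclideanSpace ℝ (Fin m)) (v v' : ℝ),
      |T x y v - T x' y' v'| ≤ L * Real.sqrt (‖x - x'‖ ^ 2 + ‖y - y'‖ ^ 2 + |v - v'| ^ 2))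
    (hT0 : T 0 0 0 = 0)
    (δu : ℕ → ℝ) (hδu : ∀ k, δu k = T (xa k) (xm k) (u k))
    (hgain : l2Norm xa ≤ γ * l2Norm (fun k => u k + δu k) + β)
    (hLγ : L < 1 / γ) :
    l2Norm xa ≤ (γ * (1 + L) * l2Norm u + γ * L * l2Norm xm + β) / (1 - γ * L) := by
  -- abbreviations
  set s : ℕ → ℝ := fun k => ‖xa k‖ ^ 2 + ‖xm k‖ ^ 2 + |u k| ^ 2 with hs_def
  have hu' : Summable fun k => |u k| ^ 2 := by simpa [Real.norm_eq_abs] using hu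
  have hs : Summable s := (hxa.add hxm).add hu'
  have hs0 : ∀ k, 0 ≤ s k := fun k => by positivity
  -- pointwise bound on δu
  have hδ : ∀ k, |δu k| ≤ L * Real.sqrt (s k) := by
    intro k
    have := hT (xa k) 0 (xm k) 0 (u k) 0
    simpa [hδu k, hT0, hs_def, sq_abs] using this
  have hδsq : ∀ k, ‖δu k‖ ^ 2 ≤ L ^ 2 * s k := by
    intro k
    have h1 : |δu k| ^ 2 ≤ (L * Real.sqrt (s k)) ^ 2 := by
      have := hδ k
      nlinarith [abs_nonneg (δu k)]
    calc ‖δu k‖ ^ 2 = |δu k| ^ 2 := by rw [Real.norm_eq_abs]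
      _ ≤ (L * Real.sqrt (s k)) ^ 2 := h1
      _ = L ^ 2 * s k := by rw [mul_pow, Real.sq_sqrt (hs0 k)]
  have hδsum : Summable fun k => ‖δu k‖ ^ 2 :=
    Summable.of_nonneg_of_le (fun k => by positivity) hδsq (hs.mul_left _)
  -- l2 norm bound on δu
  have hA0 : 0 ≤ ∑' k, ‖xa k‖ ^ 2 := tsum_nonneg fun k => by positivity
  have hB0 : 0 ≤ ∑' k, ‖xm k‖ ^ 2 := tsum_nonneg fun k => by positivity
  have hC0 : 0 ≤ ∑' k, |u k| ^ 2 := tsum_nonneg fun k => by positivity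
  have hNδ : l2Norm δu ≤ L * (l2Norm xa + l2Norm xm + l2Norm u) := by
    have h1 : (∑' k, ‖δu k‖ ^ 2) ≤ ∑' k, L ^ 2 * s k :=
      Summable.tsum_le_tsum hδsq hδsum (hs.mul_left _)
    have h2 : (∑' k, L ^ 2 * s k) = L ^ 2 * ∑' k, s k := tsum_mul_left
    have h3 : (∑' k, s k) = (∑' k, ‖xa k‖ ^ 2) + (∑' k, ‖xm k‖ ^ 2) + ∑' k, |u k| ^ 2 := by
      rw [hs_def, Summable.tsum_add (hxa.add hxm) hu', Summable.tsum_add hxa hxm]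
    calc l2Norm δu ≤ Real.sqrt (L ^ 2 * ∑' k, s k) := by
          unfold l2Norm
          exact Real.sqrt_le_sqrt (h2 ▸ h1)
      _ = L * Real.sqrt (∑' k, s k) := by
          rw [Real.sqrt_mul (sq_nonneg L), Real.sqrt_sq hL0]
      _ ≤ L * (l2Norm xa + l2Norm xm + l2Norm u) := by
          apply mul_le_mul_of_nonneg_left _ hL0
          rw [h3]
          unfold l2Norm
          calc Real.sqrt ((∑' k, ‖xa k‖ ^ 2) + (∑' k, ‖xm k‖ ^ 2) + ∑' k, |u k| ^ 2)
              ≤ Real.sqrt ((∑' k, ‖xa k‖ ^ 2) + (∑' k, ‖xm k‖ ^ 2)) +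
                  Real.sqrt (∑' k, |u k| ^ 2) :=
                sqrt_add_le' _ _ (add_nonneg hA0 hB0) hC0
            _ ≤ Real.sqrt (∑' k, ‖xa k‖ ^ 2) + Real.sqrt (∑' k, ‖xm k‖ ^ 2) +
                  Real.sqrt (∑' k, |u k| ^ 2) := by
                have := sqrt_add_le' _ _ hA0 hB0
                linarith
            _ = Real.sqrt (∑' k, ‖xa k‖ ^ 2) + Real.sqrt (∑' k, ‖xm k‖ ^ 2) +
                  Real.sqrt (∑' k, ‖u k‖ ^ 2) := by
                simp [Real.norm_eq_abs]
  -- triangle inequality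
  have htri : l2Norm (fun k => u k + δu k) ≤ l2Norm u + l2Norm δu :=
    l2_triangle u δu hu hδsum
  -- nonnegativity
  have h1 : 0 ≤ l2Norm xa := Real.sqrt_nonneg _
  have h2 : 0 ≤ l2Norm xm := Real.sqrt_nonneg _
  have h3 : 0 ≤ l2Norm u := Real.sqrt_nonneg _
  have h4 : 0 ≤ l2Norm δu := Real.sqrt_nonneg _
  have hden : 0 < 1 - γ * L := by
    have : γ * L < γ * (1 / γ) := by
      exact mul_lt_mul_of_pos_left hLγ hγ
    rw [mul_one_div, div_self hγ.ne'] at this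
    linarith
  rw [le_div_iff₀ hden]
  nlinarith [mul_le_mul_of_nonneg_left htri (le_of_lt hγ),
    mul_le_mul_of_nonneg_left hNδ (le_of_lt hγ)]
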